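/- Let f_1, ..., f_N : ℝ^d → ℝ be convex differentiable functions with L-Lipschitz gradients, and let f = ∑_i f_i. Fix points y_1, ..., y_N ∈ ℝ^d with average ȳ = (1/N)∑_i y_i. Define f̂ = ∑_i [f_i(y_i) + ∇f_i(y_i)ᵀ(ȳ - y_i)] and ĝ = ∑_i ∇f_i(y_i). Then for every x ∈ ℝ^d: f̂ + ĝᵀ(x - ȳ) ≤ f(x) ≤ f̂ + ĝᵀ(x - ȳ) + (N·L/2)‖x - ȳ‖² + L·∑_{i=1}^N ‖y_i - ȳ‖², provided N/α ≥ 2NL with α ≤ 1/(2L) (i.e., with inexact-oracle constants L' = N/α ≥ 2NL and δ = L·∑_i‖y_i - ȳ‖²). -/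

import Mathlib

open scoped RealInnerProductSpace BigOperators

section Aux

variable {F : Type*} [NormedAddCommGroup F] [InnerProductSpace ℝ F] [CompleteSpace F]

private lemma hasDerivAt_line (f : F → ℝ) (hdiff : Differentiable ℝ f)
    (x y : F) (t : ℝ) :
    HasDerivAt (fun s : ℝ => f (y + s • (x - y)))
      ⟪gradient f (y + t • (x - y)), x - y⟫ t := by
  set z := y + t • (x - y) with hz
  have hf : HasFDerivAt f (InnerProductSpace.toDual ℝ F (gradient f z)) z :=
    (hdiff z).hasGradientAt
  have hg : HasDerivAt (fun s : ℝ => y + s • (x - y)) (x - y) t := by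
    simpa using ((hasDerivAt_id t).smul_const (x - y)).const_add y
  have h := hf.comp_hasDerivAt t hg
  simp [InnerProductSpace.toDual_apply_apply] at h ⊢
  exact h

private lemma convex_lower (f : F → ℝ) (hconv : ConvexOn ℝ Set.univ f)
    (hdiff : Differentiable ℝ f) (x y : F) :
    f y + ⟪gradient f y, x - y⟫ ≤ f x := by
  set φ : ℝ → ℝ := fun s => f (y + s • (x - y)) with hφdef
  have hconvφ : ConvexOn ℝ Set.univ φ := by
    have h := hconv.comp_affineMap (AffineMap.lineMap y x : ℝ →ᵃ[ℝ] F)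
    have he : (f ∘ (AffineMap.lineMap y x : ℝ →ᵃ[ℝ] F)) = φ := by
      funext s
      show f _ = f _
      rw [AffineMap.lineMap_apply_module]
      congr 1
      module
    rwa [he, Set.preimage_univ] at h
  have h0 : HasDerivAt φ ⟪gradient f y, x - y⟫ 0 := by
    have h := hasDerivAt_line f hdiff x y 0
    simpa using h
  have hs := hconvφ.le_slope_of_hasDerivAt (Set.mem_univ (0 : ℝ)) (Set.mem_univ (1 : ℝ))
    one_pos h0
  rw [slope_def_field] at hs
  have h1 : φ 1 = f x := by simp [hφdef]
  have h2 : φ 0 = f y := by simp [hφdef]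
  rw [h1, h2] at hs
  simp only [div_one, sub_zero] at hs
  linarith

private lemma smooth_upper (f : F → ℝ) (L : ℝ) (hL : 0 < L)
    (hdiff : Differentiable ℝ f)
    (hlip : ∀ a b, ‖gradient f a - gradient f b‖ ≤ L * ‖a - b‖)
    (x y : F) :
    f x ≤ f y + ⟪gradient f y, x - y⟫ + L / 2 * ‖x - y‖ ^ 2 := by
  set φ : ℝ → ℝ := fun s => f (y + s • (x - y)) with hφdef
  set φ' : ℝ → ℝ := fun s => ⟪gradient f (y + s • (x - y)), x - y⟫ with hφ'def
  have hd : ∀ s : ℝ, HasDerivAt φ (φ' s) s := fun s => hasDerivAt_line f hdiff x y s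
  have hgcont : Continuous (gradient f) := by
    refine (LipschitzWith.of_dist_le_mul (K := L.toNNReal) ?_).continuous
    intro a b
    rw [dist_eq_norm, dist_eq_norm]
    calc ‖gradient f a - gradient f b‖ ≤ L * ‖a - b‖ := hlip a b
      _ = L.toNNReal * ‖a - b‖ := by rw [Real.coe_toNNReal _ hL.le]
  have hφ'cont : Continuous φ' := by
    apply Continuous.inner
    · exact hgcont.comp (continuous_const.add (continuous_id.smul continuous_const))
    · exact continuous_const
  have hint : ∫ s in (0:ℝ)..1, φ' s = φ 1 - φ 0 :=
    intervalIntegral.integral_eq_sub_of_hasDerivAt (fun s _ => hd s)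
      (hφ'cont.intervalIntegrable 0 1)
  have hbound : ∀ s ∈ Set.Icc (0:ℝ) 1, φ' s ≤ φ' 0 + L * ‖x - y‖ ^ 2 * s := by
    intro s hs
    have hdiffeq : φ' s - φ' 0 = ⟪gradient f (y + s • (x - y)) - gradient f y, x - y⟫ := by
      simp [hφ'def, inner_sub_left]
    have hle : φ' s - φ' 0 ≤ L * ‖x - y‖ ^ 2 * s := by
      rw [hdiffeq]
      calc ⟪gradient f (y + s • (x - y)) - gradient f y, x - y⟫
          ≤ ‖gradient f (y + s • (x - y)) - gradient f y‖ * ‖x - y‖ :=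
            real_inner_le_norm _ _
        _ ≤ (L * ‖(y + s • (x - y)) - y‖) * ‖x - y‖ :=
            mul_le_mul_of_nonneg_right (hlip _ _) (norm_nonneg _)
        _ = L * ‖x - y‖ ^ 2 * s := by
            have hns : ‖(y + s • (x - y)) - y‖ = s * ‖x - y‖ := by
              rw [add_sub_cancel_left, norm_smul, Real.norm_eq_abs, abs_of_nonneg hs.1]
            rw [hns]; ring
    linarith
  have hmono : ∫ s in (0:ℝ)..1, φ' s ≤ ∫ s in (0:ℝ)..1, (φ' 0 + L * ‖x - y‖ ^ 2 * s) := by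
    refine intervalIntegral.integral_mono_on zero_le_one
      (hφ'cont.intervalIntegrable 0 1) ?_ hbound
    exact ((by fun_prop : Continuous fun s : ℝ => φ' 0 + L * ‖x - y‖ ^ 2 * s).intervalIntegrable 0 1)
  have hrhs : ∫ s in (0:ℝ)..1, (φ' 0 + L * ‖x - y‖ ^ 2 * s) = φ' 0 + L / 2 * ‖x - y‖ ^ 2 := by
    have hI : IntervalIntegrable (fun s : ℝ => L * ‖x - y‖ ^ 2 * s)
        MeasureTheory.volume 0 1 := (by fun_prop : Continuous fun s : ℝ => L * ‖x - y‖ ^ 2 * s).intervalIntegrable 0 1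
    rw [intervalIntegral.integral_add intervalIntegrable_const hI,
      intervalIntegral.integral_const, intervalIntegral.integral_const_mul, integral_id]
    simp
    ring
  have h1 : φ 1 = f x := by simp [hφdef]
  have h2 : φ 0 = f y := by simp [hφdef]
  have h3 : φ' 0 = ⟪gradient f y, x - y⟫ := by simp [hφ'def]
  rw [hint, hrhs, h1, h2, h3] at hmono
  linarith

end Aux

theorem stmt_18 (d N : ℕ) (hN : 1 ≤ N)
    (f : Fin N → EuclideanSpace ℝ (Fin d) → ℝ) (L : ℝ) (hL : 0 < L)
    (hconv : ∀ i, ConvexOn ℝ Set.univ (f i))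
    (hdiff : ∀ i, Differentiable ℝ (f i))
    (hlip : ∀ i, ∀ x y, ‖gradient (f i) x - gradient (f i) y‖ ≤ L * ‖x - y‖)
    (y : Fin N → EuclideanSpace ℝ (Fin d))
    (ybar : EuclideanSpace ℝ (Fin d)) (hybar : ybar = (N : ℝ)⁻¹ • ∑ i, y i)
    (α : ℝ) (hα0 : 0 < α) (hα : α ≤ 1 / (2 * L)) (hα2 : (N : ℝ) / α ≥ 2 * N * L)
    (fhat : ℝ) (hfhat : fhat = ∑ i, (f i (y i) + ⟪gradient (f i) (y i), ybar - y i⟫))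
    (ghat : EuclideanSpace ℝ (Fin d)) (hghat : ghat = ∑ i, gradient (f i) (y i)) :
    ∀ x : EuclideanSpace ℝ (Fin d),
      fhat + ⟪ghat, x - ybar⟫ ≤ ∑ i, f i x ∧
      ∑ i, f i x ≤ fhat + ⟪ghat, x - ybar⟫ + (N * L / 2) * ‖x - ybar‖ ^ 2
        + L * ∑ i, ‖y i - ybar‖ ^ 2 := by
  intro x
  have hNpos : (0 : ℝ) < N := by exact_mod_cast hN
  -- linearization identity
  have hkey : fhat + ⟪ghat, x - ybar⟫
      = ∑ i, (f i (y i) + ⟪gradient (f i) (y i), x - y i⟫) := by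
    rw [hfhat, hghat, sum_inner, ← Finset.sum_add_distrib]
    refine Finset.sum_congr rfl fun i _ => ?_
    rw [add_assoc, ← inner_add_right]
    have : (ybar - y i) + (x - ybar) = x - y i := by abel
    rw [this]
  -- the mean of the points
  have hNy : (N : ℝ) • ybar = ∑ i, y i := by
    rw [hybar, smul_smul, mul_inv_cancel₀ (by positivity), one_smul]
  have hsum0 : ∑ i, (y i - ybar) = (0 : EuclideanSpace ℝ (Fin d)) := by
    rw [Finset.sum_sub_distrib, Finset.sum_const, Finset.card_univ, Fintype.card_fin,
      ← Nat.cast_smul_eq_nsmul ℝ, hNy, sub_self]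
  -- squared-norm expansion identity
  have hsq : ∑ i, ‖x - y i‖ ^ 2
      = (N : ℝ) * ‖x - ybar‖ ^ 2 + ∑ i, ‖y i - ybar‖ ^ 2 := by
    have hterm : ∀ i, ‖x - y i‖ ^ 2
        = ‖x - ybar‖ ^ 2 - 2 * ⟪x - ybar, y i - ybar⟫ + ‖y i - ybar‖ ^ 2 := by
      intro i
      have : x - y i = (x - ybar) - (y i - ybar) := by abel
      rw [this, norm_sub_sq_real]
    calc ∑ i, ‖x - y i‖ ^ 2
        = ∑ i, (‖x - ybar‖ ^ 2 - 2 * ⟪x - ybar, y i - ybar⟫ + ‖y i - ybar‖ ^ 2) :=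
          Finset.sum_congr rfl fun i _ => hterm i
      _ = (N : ℝ) * ‖x - ybar‖ ^ 2 - 2 * ⟪x - ybar, ∑ i, (y i - ybar)⟫
            + ∑ i, ‖y i - ybar‖ ^ 2 := by
          rw [Finset.sum_add_distrib, Finset.sum_sub_distrib, inner_sum, Finset.mul_sum,
            Finset.sum_const, Finset.card_univ, Fintype.card_fin, nsmul_eq_mul]
      _ = (N : ℝ) * ‖x - ybar‖ ^ 2 + ∑ i, ‖y i - ybar‖ ^ 2 := by
          rw [hsum0, inner_zero_right]; ring
  constructor
  · rw [hkey]
    exact Finset.sum_le_sum fun i _ => convex_lower (f i) (hconv i) (hdiff i) x (y i)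
  · have hup : ∑ i, f i x
        ≤ ∑ i, (f i (y i) + ⟪gradient (f i) (y i), x - y i⟫ + L / 2 * ‖x - y i‖ ^ 2) :=
      Finset.sum_le_sum fun i _ => smooth_upper (f i) L hL (hdiff i) (hlip i) x (y i)
    rw [Finset.sum_add_distrib, ← Finset.mul_sum, hsq] at hup
    rw [hkey]
    have hnn : (0 : ℝ) ≤ ∑ i, ‖y i - ybar‖ ^ 2 :=
      Finset.sum_nonneg fun i _ => by positivity
    nlinarith [hup, hnn, hL.le]
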